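/- For each x ∈ ℝ there exists a unique positive number l(x) satisfying l(x)²·f'(x² + l(x)²) = 2(n−1); moreover √(2(n−1)/M) ≤ l(x) ≤ √(2(n−1)/m). -/

import Mathlib

/-- For each `x` there is a unique `l > 0` with `l² f'(x² + l²) = 2(n−1)`, and
`√(2(n−1)/M) ≤ l ≤ √(2(n−1)/m)`. -/
theorem exists_unique_l
    (n : ℕ) (hn : 2 ≤ n) (m M : ℝ) (hm : 0 < m) (hmM : m ≤ M)
    (f : ℝ → ℝ) (hf : ContDiff ℝ 2 f)
    (hconv : ∀ s : ℝ, 0 ≤ deriv (deriv f) s)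
    (hlow : ∀ s : ℝ, m ≤ deriv f s) (hup : ∀ s : ℝ, deriv f s ≤ M) :
    ∀ x : ℝ, ∃ l : ℝ,
      (0 < l ∧ l ^ 2 * deriv f (x ^ 2 + l ^ 2) = 2 * ((n : ℝ) - 1)) ∧
      Real.sqrt (2 * ((n : ℝ) - 1) / M) ≤ l ∧
      l ≤ Real.sqrt (2 * ((n : ℝ) - 1) / m) ∧
      ∀ l' : ℝ, 0 < l' → l' ^ 2 * deriv f (x ^ 2 + l' ^ 2) = 2 * ((n : ℝ) - 1) →
        l' = l := by
  intro x
  set c : ℝ := 2 * ((n : ℝ) - 1) with hcdef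
  have hn2 : (2 : ℝ) ≤ (n : ℝ) := by exact_mod_cast hn
  have hc0 : 0 < c := by simp only [hcdef]; nlinarith
  have hM0 : 0 < M := lt_of_lt_of_le hm hmM
  -- deriv f is differentiable
  have hf2 : ContDiff ℝ ((1 : ℕ∞) + 1) f := hf.of_le (by norm_num)
  have hfd : Differentiable ℝ (deriv f) :=
    ((contDiff_succ_iff_deriv.mp hf2).2.2).differentiable (by simp)
  have hfmono : Monotone (deriv f) :=
    monotone_of_deriv_nonneg hfd hconv
  -- g continuous
  set g : ℝ → ℝ := fun l => l ^ 2 * deriv f (x ^ 2 + l ^ 2) with hgdef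
  have hgcont : Continuous g := by
    apply (continuous_pow 2).mul
    exact hfd.continuous.comp (by continuity)
  -- endpoints
  set a : ℝ := Real.sqrt (c / M) with hadef
  set b : ℝ := Real.sqrt (c / m) with hbdef
  have ha0 : 0 < a := Real.sqrt_pos.mpr (div_pos hc0 hM0)
  have ha2 : a ^ 2 = c / M := Real.sq_sqrt (le_of_lt (div_pos hc0 hM0))
  have hb2 : b ^ 2 = c / m := Real.sq_sqrt (le_of_lt (div_pos hc0 hm))
  have hab : a ≤ b := Real.sqrt_le_sqrt (by
    apply div_le_div_of_nonneg_left hc0.le hm hmM)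
  have hga : g a ≤ c := by
    have h1 : g a ≤ a ^ 2 * M := by
      apply mul_le_mul_of_nonneg_left (hup _) (by positivity)
    rw [ha2] at h1
    calc g a ≤ c / M * M := h1
    _ = c := div_mul_cancel₀ c hM0.ne'
  have hgb : c ≤ g b := by
    have h1 : b ^ 2 * m ≤ g b := by
      apply mul_le_mul_of_nonneg_left (hlow _) (by positivity)
    rw [hb2] at h1
    calc c = c / m * m := (div_mul_cancel₀ c hm.ne').symm
    _ ≤ g b := h1
  -- IVT
  obtain ⟨l, hlmem, hgl⟩ := intermediate_value_Icc hab (hgcont.continuousOn)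
    (Set.mem_Icc.mpr ⟨hga, hgb⟩)
  have hl0 : 0 < l := lt_of_lt_of_le ha0 hlmem.1
  -- strict mono of g on positives
  have hstrict : ∀ l1 l2 : ℝ, 0 < l1 → 0 < l2 → l1 < l2 → g l1 < g l2 := by
    intro l1 l2 h1 h2 h12
    have hsq : l1 ^ 2 < l2 ^ 2 := by nlinarith
    have hmono : deriv f (x ^ 2 + l1 ^ 2) ≤ deriv f (x ^ 2 + l2 ^ 2) :=
      hfmono (by linarith)
    have hpos : 0 < deriv f (x ^ 2 + l1 ^ 2) := lt_of_lt_of_le hm (hlow _)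
    exact mul_lt_mul hsq hmono hpos (by positivity)
  refine ⟨l, ⟨hl0, hgl⟩, hlmem.1, hlmem.2, ?_⟩
  intro l' hl' hgl'
  by_contra hne
  rcases lt_or_gt_of_ne hne with h | h
  · have h2 := hstrict l' l hl' hl0 h
    rw [hgl] at h2
    exact absurd (hgl' : g l' = c) h2.ne
  · have h2 := hstrict l l' hl0 hl' h
    rw [hgl] at h2
    exact absurd (hgl' : g l' = c) h2.ne'
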